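/- Let F : ℝ^d → ℝ be L-smooth and μ-strongly convex with L ≤ μ. Let θ_N, θ_i, θ_j ∈ ℝ^d with δ_i := ‖θ_N - θ_i‖ and δ_j := ‖θ_N - θ_j‖ satisfying δ_i ≤ δ_j, and suppose ‖∇F(θ_N)‖ ≤ L|δ_i² - δ_j²| / (2‖θ_i - θ_j‖) (with θ_i ≠ θ_j). Then F(θ_i) ≤ F(θ_j). -/

import Mathlib

open scoped RealInnerProductSpace

/-- FedSAC Theorem 1 (Fairness in Training Loss). -/
theorem fedsac_fairness_in_training_loss
    {d : ℕ} (F : EuclideanSpace ℝ (Fin d) → ℝ) (L μ : ℝ)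
    (hsmooth : ∀ x y, F x ≤ F y + (inner ℝ (gradient F y) (x - y) : ℝ) + L / 2 * ‖x - y‖ ^ 2)
    (hconv : ∀ x y, F x ≥ F y + (inner ℝ (gradient F y) (x - y) : ℝ) + μ / 2 * ‖x - y‖ ^ 2)
    (hLμ : L ≤ μ)
    (θN θi θj : EuclideanSpace ℝ (Fin d))
    (hne : θi ≠ θj)
    (hδ : ‖θN - θi‖ ≤ ‖θN - θj‖)
    (hgrad : ‖gradient F θN‖ ≤
      L * |‖θN - θi‖ ^ 2 - ‖θN - θj‖ ^ 2| / (2 * ‖θi - θj‖)) :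
    F θi ≤ F θj := by
  set g := gradient F θN with hg
  have h1 := hsmooth θi θN
  have h2 := hconv θj θN
  have hpos : 0 < ‖θi - θj‖ := by
    rw [norm_pos_iff, sub_ne_zero]; exact hne
  have habs : |‖θN - θi‖ ^ 2 - ‖θN - θj‖ ^ 2| = ‖θN - θj‖ ^ 2 - ‖θN - θi‖ ^ 2 := by
    rw [abs_sub_comm, abs_of_nonneg]
    nlinarith [norm_nonneg (θN - θi), norm_nonneg (θN - θj)]
  rw [habs] at hgrad
  have hinner : (inner ℝ g (θi - θN) : ℝ) - inner ℝ g (θj - θN) ≤ ‖g‖ * ‖θi - θj‖ := by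
    have h := real_inner_le_norm g (θi - θj)
    have heq : (inner ℝ g (θi - θN) : ℝ) - inner ℝ g (θj - θN) = inner ℝ g (θi - θj) := by
      rw [← inner_sub_right]; congr 1; abel
    linarith
  have hgn : ‖g‖ * ‖θi - θj‖ ≤ L * (‖θN - θj‖ ^ 2 - ‖θN - θi‖ ^ 2) / 2 := by
    have h := mul_le_mul_of_nonneg_right hgrad (le_of_lt hpos)
    calc ‖g‖ * ‖θi - θj‖ ≤
        L * (‖θN - θj‖ ^ 2 - ‖θN - θi‖ ^ 2) / (2 * ‖θi - θj‖) * ‖θi - θj‖ := h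
      _ = L * (‖θN - θj‖ ^ 2 - ‖θN - θi‖ ^ 2) / 2 := by
          field_simp
  rw [norm_sub_rev θi θN] at h1
  rw [norm_sub_rev θj θN] at h2
  nlinarith [sq_nonneg ‖θN - θj‖]
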